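/- For p ∈ [1/6, 1/2), the function y ↦ h(f⁻¹(y) * p) is convex, where f(x) = h(x/2) + h((1-x)/2) - 1 restricted to [0, 1/2], f⁻¹ is its inverse, t*p = t(1-p) + (1-t)p, and h is the binary entropy function. -/

import Mathlib

open Set

noncomputable def binent (x : ℝ) : ℝ := -x * Real.logb 2 x - (1 - x) * Real.logb 2 (1 - x)

noncomputable def f (x : ℝ) : ℝ := binent (x / 2) + binent ((1 - x) / 2) - 1

open Real in
private lemma binent_eq (x : ℝ) : binent x = Real.binEntropy x / Real.log 2 := by
  simp only [binent, Real.binEntropy, Real.logb, Real.log_inv]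
  ring

private lemma binent_continuous : Continuous binent := by
  simp only [funext binent_eq]
  exact Real.binEntropy_continuous.div_const _

open Real

lemma hasDerivAt_log_affine (a b t : ℝ) (h : a + b*t ≠ 0) :
    HasDerivAt (fun t => Real.log (a + b*t)) (b/(a+b*t)) t := by
  have inner : HasDerivAt (fun t : ℝ => a + b*t) b t := by
    simpa using ((hasDerivAt_id t).const_mul b).const_add a
  have := (Real.hasDerivAt_log h).comp t inner
  refine this.congr_deriv ?_
  field_simp

lemma log_ratio_lower {s : ℝ} (h0 : 0 ≤ s) (h1 : s < 1) :
    2*(s + s^3/3 + s^5/5 + s^7/7) ≤ Real.log (1+s) - Real.log (1-s) := by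
  set φ : ℝ → ℝ := fun t => (Real.log (1+t) - Real.log (1-t)) - 2*(t + t^3/3 + t^5/5 + t^7/7) with hφ
  have hder : ∀ t ∈ Ioo (0:ℝ) 1, HasDerivAt φ
      (1/(1+t) + 1/(1-t) - 2*(1 + t^2 + t^4 + t^6)) t := by
    intro t ht
    have h1t : (1:ℝ) + 1*t ≠ 0 := by nlinarith [ht.1]
    have h2t : (1:ℝ) + (-1)*t ≠ 0 := by nlinarith [ht.2]
    have hl1 := hasDerivAt_log_affine 1 1 t h1t
    have hl2 := hasDerivAt_log_affine 1 (-1) t h2t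
    have hpoly : HasDerivAt (fun t : ℝ => 2*(t + t^3/3 + t^5/5 + t^7/7))
        (2*(1 + t^2 + t^4 + t^6)) t := by
      have h1 := hasDerivAt_id t
      have h3 := hasDerivAt_pow 3 t
      have h5 := hasDerivAt_pow 5 t
      have h7 := hasDerivAt_pow 7 t
      refine ((((h1.add (h3.div_const 3)).add ((h5).div_const 5)).add
        ((h7).div_const 7)).const_mul 2).congr_deriv ?_
      push_cast; ring
    have := (hl1.sub hl2).sub hpoly
    simp only [one_mul, neg_one_mul, ← sub_eq_add_neg] at this
    refine this.congr_deriv ?_; ring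
  have hcont : ∀ t ∈ Ico (0:ℝ) 1, ContinuousWithinAt φ (Ico (0:ℝ) 1) t := by
    intro t ht
    rcases eq_or_lt_of_le ht.1 with h|h
    · -- t = 0 : continuity at 0
      subst h
      apply ContinuousWithinAt.sub
      · apply ContinuousWithinAt.sub
        · exact ((Real.continuousAt_log (by norm_num)).comp (by fun_prop)).continuousWithinAt
        · exact ((Real.continuousAt_log (by norm_num)).comp (by fun_prop)).continuousWithinAt
      · exact (by fun_prop : Continuous fun t : ℝ => 2*(t + t^3/3 + t^5/5 + t^7/7)).continuousWithinAt
    · exact ((hder t ⟨h, ht.2⟩).continuousAt).continuousWithinAt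
  have hmono : MonotoneOn φ (Ico (0:ℝ) 1) := by
    apply monotoneOn_of_hasDerivWithinAt_nonneg (convex_Ico 0 1) hcont
    · intro t ht
      rw [interior_Ico] at ht
      exact ((hder t ht).hasDerivWithinAt)
    · intro t ht
      rw [interior_Ico] at ht
      have h1t : (0:ℝ) < 1 + t := by nlinarith [ht.1]
      have h2t : (0:ℝ) < 1 - t := by nlinarith [ht.2]
      have key : 1/(1+t) + 1/(1-t) - 2*(1 + t^2 + t^4 + t^6)
          = 2*t^8/((1+t)*(1-t)) := by field_simp; ring
      rw [key]; positivity
  have h00 : φ 0 = 0 := by simp [hφ]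
  have := hmono (show (0:ℝ) ∈ Ico (0:ℝ) 1 by constructor <;> norm_num)
    (show s ∈ Ico (0:ℝ) 1 from ⟨h0, h1⟩) h0
  rw [h00] at this
  simp only [hφ] at this
  linarith


lemma hasDerivAt_log_one_add (t : ℝ) (h : (1:ℝ) + t ≠ 0) :
    HasDerivAt (fun t : ℝ => Real.log (1+t)) (1/(1+t)) t := by
  have inner : HasDerivAt (fun t : ℝ => 1 + t) 1 t := by
    simpa using (hasDerivAt_id t).const_add 1
  have := (Real.hasDerivAt_log h).comp t inner
  refine this.congr_deriv ?_
  field_simp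

lemma hasDerivAt_log_one_sub (t : ℝ) (h : (1:ℝ) - t ≠ 0) :
    HasDerivAt (fun t : ℝ => Real.log (1-t)) (-(1/(1-t))) t := by
  have inner : HasDerivAt (fun t : ℝ => 1 - t) (-1) t := by
    simpa using (hasDerivAt_id t).const_sub 1
  have := (Real.hasDerivAt_log h).comp t inner
  refine this.congr_deriv ?_
  field_simp


lemma hasDerivAt_L (t : ℝ) (h1 : (1:ℝ)+t ≠ 0) (h2 : (1:ℝ)-t ≠ 0) :
    HasDerivAt (fun t : ℝ => Real.log (1+t) - Real.log (1-t)) (1/(1+t) + 1/(1-t)) t := by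
  have := (hasDerivAt_log_one_add t h1).sub (hasDerivAt_log_one_sub t h2)
  refine this.congr_deriv ?_
  ring

lemma log_ratio_upper {z : ℝ} (h0 : 0 ≤ z) (h1 : z < 1) :
    Real.log (1+z) - Real.log (1-z) ≤ 2*z + 2*z^3/(3*(1-z^2)) := by
  set χ : ℝ → ℝ := fun t => 2*t + 2*t^3/(3*(1-t^2)) - (Real.log (1+t) - Real.log (1-t)) with hχ
  have hder : ∀ t ∈ Ioo (0:ℝ) 1, HasDerivAt χ
      (2 + (2*(3*t^2*(3*(1-t^2)) - t^3*(3*(-2*t))))/(3*(1-t^2))^2 - (1/(1+t) + 1/(1-t))) t := by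
    intro t ht
    have h1t : (1:ℝ) + t ≠ 0 := by nlinarith [ht.1]
    have h2t : (1:ℝ) - t ≠ 0 := by nlinarith [ht.2]
    have hne : (3*(1-t^2)) ≠ 0 := by nlinarith [ht.1, ht.2]
    have hL := hasDerivAt_L t h1t h2t
    have hq : HasDerivAt (fun t : ℝ => 2*t^3/(3*(1-t^2)))
        ((2*(3*t^2*(3*(1-t^2)) - t^3*(3*(-2*t))))/(3*(1-t^2))^2) t := by
      have hnum : HasDerivAt (fun t : ℝ => t^3) (3*t^2) t := by
        simpa using hasDerivAt_pow 3 t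
      have hden : HasDerivAt (fun t : ℝ => 3*(1-t^2)) (3*(-2*t)) t := by
        have := (hasDerivAt_pow 2 t).const_sub 1
        simpa using (this.const_mul 3)
      have := (hnum.div hden hne).const_mul 2
      refine (this.congr_deriv ?_).congr_of_eventuallyEq
        (Filter.Eventually.of_forall fun y => by simp only [Pi.div_apply]; ring)
      field_simp
    have hlin : HasDerivAt (fun t : ℝ => 2*t) 2 t := by
      simpa using (hasDerivAt_id t).const_mul 2
    have := (hlin.add hq).sub hL
    exact this
  have hcont : ∀ t ∈ Ico (0:ℝ) 1, ContinuousWithinAt χ (Ico (0:ℝ) 1) t := by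
    intro t ht
    rcases eq_or_lt_of_le ht.1 with h|h
    · subst h
      apply ContinuousWithinAt.sub
      · apply ContinuousAt.continuousWithinAt
        apply ContinuousAt.add (by fun_prop)
        exact ContinuousAt.div (by fun_prop) (by fun_prop) (by norm_num)
      · apply ContinuousWithinAt.sub
        · exact ((Real.continuousAt_log (by norm_num)).comp (by fun_prop)).continuousWithinAt
        · exact ((Real.continuousAt_log (by norm_num)).comp (by fun_prop)).continuousWithinAt
    · exact ((hder t ⟨h, ht.2⟩).continuousAt).continuousWithinAt
  have hmono : MonotoneOn χ (Ico (0:ℝ) 1) := by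
    apply monotoneOn_of_hasDerivWithinAt_nonneg (convex_Ico 0 1) hcont
    · intro t ht
      rw [interior_Ico] at ht
      exact ((hder t ht).hasDerivWithinAt)
    · intro t ht
      rw [interior_Ico] at ht
      have h1t : (0:ℝ) < 1 + t := by nlinarith [ht.1]
      have h2t : (0:ℝ) < 1 - t := by nlinarith [ht.2]
      have e1 : (3*(1-t^2)) = 3*((1+t)*(1-t)) := by ring
      have key : 2 + (2*(3*t^2*(3*(1-t^2)) - t^3*(3*(-2*t))))/(3*(1-t^2))^2 - (1/(1+t) + 1/(1-t))
          = 4*t^4/(3*((1+t)*(1-t))^2) := by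
        rw [e1]
        field_simp
        ring
      rw [key]; positivity
  have h00 : χ 0 = 0 := by simp [hχ]
  have := hmono (show (0:ℝ) ∈ Ico (0:ℝ) 1 by constructor <;> norm_num)
    (show z ∈ Ico (0:ℝ) 1 from ⟨h0, h1⟩) h0
  rw [h00] at this
  simp only [hχ] at this
  linarith

lemma ratio_antitone {v w : ℝ} (h0 : 0 < v) (hvw : v ≤ w) (h1 : w < 1) :
    (1-w^2)*(Real.log (1+w) - Real.log (1-w))*v ≤ (1-v^2)*(Real.log (1+v) - Real.log (1-v))*w := by
  set g : ℝ → ℝ := fun t => (1-t^2)*(Real.log (1+t) - Real.log (1-t))/t with hg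
  have hder : ∀ t ∈ Ioo (0:ℝ) 1, HasDerivAt g
      ((((-(2*t))*(Real.log (1+t) - Real.log (1-t)) + (1-t^2)*(1/(1+t) + 1/(1-t)))*t
        - (1-t^2)*(Real.log (1+t) - Real.log (1-t)))/t^2) t := by
    intro t ht
    have h1t : (1:ℝ) + t ≠ 0 := by nlinarith [ht.1]
    have h2t : (1:ℝ) - t ≠ 0 := by nlinarith [ht.2]
    have hL := hasDerivAt_L t h1t h2t
    have hc : HasDerivAt (fun t : ℝ => 1 - t^2) (-(2*t)) t := by
      have := (hasDerivAt_pow 2 t).const_sub 1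
      simpa using this
    have hnum := hc.mul hL
    have := hnum.div (hasDerivAt_id' (x := t)) (ne_of_gt ht.1)
    refine this.congr_deriv ?_
    simp only [Pi.mul_apply]
    ring
  have hmono : AntitoneOn g (Ioo (0:ℝ) 1) := by
    apply antitoneOn_of_hasDerivWithinAt_nonpos (convex_Ioo 0 1)
    · exact fun t ht => ((hder t ht).continuousAt).continuousWithinAt
    · intro t ht
      rw [interior_Ioo] at ht
      exact ((hder t ht).hasDerivWithinAt)
    · intro t ht
      rw [interior_Ioo] at ht
      have h1t : (0:ℝ) < 1 + t := by nlinarith [ht.1]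
      have h2t : (0:ℝ) < 1 - t := by nlinarith [ht.2]
      set L := Real.log (1+t) - Real.log (1-t) with hL
      have hLlow : 2*t ≤ L := by
        have h4 := log_ratio_lower (le_of_lt ht.1) ht.2
        nlinarith [pow_pos ht.1 3, pow_pos ht.1 5, pow_pos ht.1 7]
      have key : ((-(2*t))*L + (1-t^2)*(1/(1+t) + 1/(1-t)))*t - (1-t^2)*L
          = 2*t - (1+t^2)*L := by
        field_simp
        ring
      rw [key]
      apply div_nonpos_of_nonpos_of_nonneg
      · nlinarith [mul_le_mul_of_nonneg_left hLlow (by positivity : (0:ℝ) ≤ 1+t^2),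
          pow_pos ht.1 3]
      · positivity
  have hmem_v : v ∈ Ioo (0:ℝ) 1 := ⟨h0, lt_of_le_of_lt hvw h1⟩
  have hmem_w : w ∈ Ioo (0:ℝ) 1 := ⟨lt_of_lt_of_le h0 hvw, h1⟩
  have := hmono hmem_v hmem_w hvw
  simp only [hg] at this
  rw [div_le_div_iff₀ (lt_of_lt_of_le h0 hvw) h0] at this
  linarith


-- the cleared polynomial inequality: for 0 < u < 1,
-- 24u(1-u²)(9-u²) + 128u³ ≤ 2(3-u²)(9-4u²)(3+u²)·2(s+s³/3+s⁵/5+s⁷/7), s = 2u/3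
lemma Epoly {u : ℝ} (h0 : 0 < u) (h1 : u < 1) :
    24*u*(1-u^2)*(9-u^2) + 128*u^3 ≤
    2*(3-u^2)*(9-4*u^2)*(3+u^2)*(2*((2*u/3) + (2*u/3)^3/3 + (2*u/3)^5/5 + (2*u/3)^7/7)) := by
  nlinarith [pow_pos h0 3, pow_pos h0 5, pow_pos h0 7, pow_pos h0 9, pow_pos h0 11,
    pow_pos h0 13, sq_nonneg u, sq_nonneg (1-u^2), sq_nonneg (u*(1-u^2)),
    mul_pos (pow_pos h0 3) (sub_pos.mpr h1), sq_nonneg (u^2-1), sq_nonneg (u^3-u),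
    mul_nonneg (pow_pos h0 3).le (sq_nonneg (1-u^2)), mul_nonneg (pow_pos h0 5).le (sq_nonneg (1-u^2)),
    mul_nonneg (pow_pos h0 7).le (sq_nonneg (1-u^2)), mul_nonneg (pow_pos h0 9).le (sq_nonneg (1-u^2))]



set_option maxHeartbeats 1000000 in
lemma keyUV {u v : ℝ} (hu0 : 0 < u) (hu1 : u < 1) (hv0 : 0 < v) (hvw : v ≤ 2*u/3) :
    v*(1-u^2)*(9-u^2)*((Real.log (3+u) + Real.log (1+u)) - (Real.log (3-u) + Real.log (1-u)))
    ≤ 4*u*(3-u^2)*(1-v^2)*(Real.log (1+v) - Real.log (1-v)) := by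
  set w : ℝ := 2*u/3 with hw
  set z : ℝ := 4*u/(3+u^2) with hz
  set S : ℝ := 2*(w + w^3/3 + w^5/5 + w^7/7) with hS
  have hw0 : 0 < w := by rw [hw]; linarith
  have hw1 : w < 1 := by rw [hw]; linarith
  have h3u : (0:ℝ) < 3+u^2 := by positivity
  have hz0 : 0 ≤ z := by rw [hz]; positivity
  have hz1 : z < 1 := by
    rw [hz, div_lt_one h3u]; nlinarith
  have hu1' : (0:ℝ) < 1 - u := by linarith
  have hu1'' : (0:ℝ) < 1 + u := by linarith
  have h3m : (0:ℝ) < 3 - u := by linarith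
  have h3p : (0:ℝ) < 3 + u := by linarith
  have h1u2 : (0:ℝ) < 1 - u^2 := by nlinarith
  have h9u2 : (0:ℝ) < 9 - u^2 := by nlinarith
  have h3u2 : (0:ℝ) < 3 - u^2 := by nlinarith
  have hw2 : (0:ℝ) < 1 - w^2 := by nlinarith
  -- identity: Λd = log(1+z) - log(1-z)
  have e1 : (1:ℝ)+z = ((1+u)*(3+u))/(3+u^2) := by rw [hz]; field_simp; ring
  have e2 : (1:ℝ)-z = ((1-u)*(3-u))/(3+u^2) := by rw [hz]; field_simp; ring
  have hlog1 : Real.log (1+z) = Real.log (1+u) + Real.log (3+u) - Real.log (3+u^2) := by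
    rw [e1, Real.log_div (by positivity) (by positivity),
      Real.log_mul (by positivity) (by positivity)]
  have hlog2 : Real.log (1-z) = Real.log (1-u) + Real.log (3-u) - Real.log (3+u^2) := by
    rw [e2, Real.log_div (by positivity) (by positivity),
      Real.log_mul (by positivity) (by positivity)]
  have hΛd : (Real.log (3+u) + Real.log (1+u)) - (Real.log (3-u) + Real.log (1-u))
      = Real.log (1+z) - Real.log (1-z) := by rw [hlog1, hlog2]; ring
  have hz2 : (1 - z^2) = (1-u^2)*(9-u^2)/(3+u^2)^2 := by rw [hz]; field_simp; ring
  have hA2 := log_ratio_upper hz0 hz1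
  have hA1 := log_ratio_lower hw0.le hw1
  have hA3 := ratio_antitone hv0 hvw hw1
  have key := Epoly hu0 hu1
  -- rational form of the upper bound
  have hA2' : Real.log (1+z) - Real.log (1-z)
      ≤ (24*u*(1-u^2)*(9-u^2) + 128*u^3)/(3*(3+u^2)*((1-u^2)*(9-u^2))) := by
    refine le_trans hA2 (le_of_eq ?_)
    rw [hz2, hz]
    field_simp
    ring
  rw [hΛd]
  calc v*(1-u^2)*(9-u^2)*(Real.log (1+z) - Real.log (1-z))
      ≤ v*(1-u^2)*(9-u^2)*((24*u*(1-u^2)*(9-u^2) + 128*u^3)/(3*(3+u^2)*((1-u^2)*(9-u^2)))) := by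
        apply mul_le_mul_of_nonneg_left hA2' (by positivity)
    _ = v*((24*u*(1-u^2)*(9-u^2) + 128*u^3)/(3*(3+u^2))) := by
        field_simp
    _ ≤ v*((2*(3-u^2)*(9-4*u^2)*(3+u^2)*(2*((2*u/3) + (2*u/3)^3/3 + (2*u/3)^5/5 + (2*u/3)^7/7)))/(3*(3+u^2))) := by
        apply mul_le_mul_of_nonneg_left _ hv0.le
        gcongr
    _ = 6*v*((3-u^2)*((1-w^2)*S)) := by
        rw [hS, hw]
        field_simp
        ring
    _ ≤ 6*v*((3-u^2)*((1-w^2)*(Real.log (1+w) - Real.log (1-w)))) := by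
        apply mul_le_mul_of_nonneg_left _ (by positivity : (0:ℝ) ≤ 6*v)
        apply mul_le_mul_of_nonneg_left _ h3u2.le
        apply mul_le_mul_of_nonneg_left _ hw2.le
        rw [hS]; exact hA1
    _ = 6*(3-u^2)*((1-w^2)*(Real.log (1+w) - Real.log (1-w))*v) := by ring
    _ ≤ 6*(3-u^2)*((1-v^2)*(Real.log (1+v) - Real.log (1-v))*w) := by
        apply mul_le_mul_of_nonneg_left hA3 (by positivity)
    _ = 4*u*(3-u^2)*(1-v^2)*(Real.log (1+v) - Real.log (1-v)) := by rw [hw]; ring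




noncomputable def NNf (p : ℝ) : ℝ → ℝ :=
  fun x => (Real.log (1 - (p+(1-2*p)*x)) - Real.log (p+(1-2*p)*x)) * (1-2*p)
noncomputable def DDf : ℝ → ℝ :=
  fun x => ((Real.log (1 - x/2) - Real.log (x/2)) - (Real.log ((1+x)/2) - Real.log ((1-x)/2)))/2

lemma q_mem {p x : ℝ} (hp6 : 1/6 ≤ p) (hp2 : p < 1/2) (hx0 : 0 ≤ x) (hx2 : x ≤ 1/2) :
    0 < p+(1-2*p)*x ∧ p+(1-2*p)*x ≤ 1/2 := by
  constructor <;> nlinarith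

lemma DDf_pos {x : ℝ} (hx0 : 0 < x) (hx2 : x < 1/2) : 0 < DDf x := by
  have h1 : Real.log ((1+x)/2) < Real.log (1 - x/2) := by
    apply Real.log_lt_log (by linarith) (by linarith)
  have h2 : Real.log (x/2) < Real.log ((1-x)/2) := by
    apply Real.log_lt_log (by linarith) (by linarith)
  simp only [DDf]
  linarith

lemma hasDerivAt_NNf {p x : ℝ} (hp6 : 1/6 ≤ p) (hp2 : p < 1/2) (hx0 : 0 < x) (hx2 : x < 1/2) :
    HasDerivAt (NNf p)
      (((-(1-2*p))/(1-(p+(1-2*p)*x)) - (1-2*p)/(p+(1-2*p)*x))*(1-2*p)) x := by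
  have hq := q_mem hp6 hp2 hx0.le hx2.le
  have e : ∀ y : ℝ, (1-p) + (-(1-2*p))*y = 1 - (p+(1-2*p)*y) := fun y => by ring
  have h1 : HasDerivAt (fun y : ℝ => Real.log (1 - (p+(1-2*p)*y)))
      ((-(1-2*p))/(1-(p+(1-2*p)*x))) x := by
    have h := hasDerivAt_log_affine (1-p) (-(1-2*p)) x (by rw [e]; intro hcon; nlinarith [hq.1, hq.2])
    simp only [e] at h
    exact h
  have h2 : HasDerivAt (fun y : ℝ => Real.log (p+(1-2*p)*y))
      ((1-2*p)/(p+(1-2*p)*x)) x := by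
    exact hasDerivAt_log_affine p (1-2*p) x (ne_of_gt hq.1)
  exact (h1.sub h2).mul_const (1-2*p)

lemma hasDerivAt_DDf {x : ℝ} (hx0 : 0 < x) (hx2 : x < 1/2) :
    HasDerivAt DDf ((-(1/(2-x)) - 1/x - 1/(1+x) - 1/(1-x))/2) x := by
  have e1 : ∀ y : ℝ, (1:ℝ) + (-(1/2))*y = 1 - y/2 := fun y => by ring
  have e2 : ∀ y : ℝ, (0:ℝ) + (1/2)*y = y/2 := fun y => by ring
  have e3 : ∀ y : ℝ, (1/2:ℝ) + (1/2)*y = (1+y)/2 := fun y => by ring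
  have e4 : ∀ y : ℝ, (1/2:ℝ) + (-(1/2))*y = (1-y)/2 := fun y => by ring
  have h1 : HasDerivAt (fun y : ℝ => Real.log (1 - y/2)) ((-(1/2))/(1-x/2)) x := by
    have h := hasDerivAt_log_affine 1 (-(1/2)) x (by rw [e1]; intro hc; nlinarith)
    simp only [e1] at h; exact h
  have h2 : HasDerivAt (fun y : ℝ => Real.log (y/2)) ((1/2)/(x/2)) x := by
    have h := hasDerivAt_log_affine 0 (1/2) x (by rw [e2]; intro hc; nlinarith)
    simp only [e2] at h; exact h
  have h3 : HasDerivAt (fun y : ℝ => Real.log ((1+y)/2)) ((1/2)/((1+x)/2)) x := by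
    have h := hasDerivAt_log_affine (1/2) (1/2) x (by rw [e3]; intro hc; nlinarith)
    simp only [e3] at h; exact h
  have h4 : HasDerivAt (fun y : ℝ => Real.log ((1-y)/2)) ((-(1/2))/((1-x)/2)) x := by
    have h := hasDerivAt_log_affine (1/2) (-(1/2)) x (by rw [e4]; intro hc; nlinarith)
    simp only [e4] at h; exact h
  have := ((h1.sub h2).sub (h3.sub h4)).div_const 2
  refine this.congr_deriv ?_
  have n1 : (1:ℝ) - x/2 ≠ 0 := by intro hc; nlinarith
  have n2 : x ≠ 0 := ne_of_gt hx0
  have n3 : (1:ℝ) + x ≠ 0 := by nlinarith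
  have n4 : (1:ℝ) - x ≠ 0 := by intro hc; nlinarith
  have n5 : (2:ℝ) - x ≠ 0 := by intro hc; nlinarith
  field_simp
  ring



set_option maxHeartbeats 2000000 in
lemma keyX {p x : ℝ} (hp6 : 1/6 ≤ p) (hp2 : p < 1/2) (hx0 : 0 < x) (hx2 : x < 1/2) :
    0 ≤ (((-(1-2*p))/(1-(p+(1-2*p)*x)) - (1-2*p)/(p+(1-2*p)*x))*(1-2*p)) * DDf x
      - NNf p x * ((-(1/(2-x)) - 1/x - 1/(1+x) - 1/(1-x))/2) := by
  have hu0 : (0:ℝ) < 1-2*x := by linarith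
  have hu1 : (1:ℝ)-2*x < 1 := by linarith
  have hv0 : (0:ℝ) < (1-2*p)*(1-2*x) := by nlinarith
  have hvw : (1-2*p)*(1-2*x) ≤ 2*(1-2*x)/3 := by nlinarith
  have kuv := keyUV hu0 hu1 hv0 hvw
  set u : ℝ := 1-2*x with hu
  set v : ℝ := (1-2*p)*(1-2*x) with hv
  -- rewrite all logs into u,v atoms
  have l1 : Real.log (1 - x/2) = Real.log (3+u) - Real.log 4 := by
    rw [show (1:ℝ) - x/2 = (3+u)/4 by rw [hu]; ring]
    rw [Real.log_div (by rw [hu]; intro hc; nlinarith) (by norm_num)]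
  have l2 : Real.log (x/2) = Real.log (1-u) - Real.log 4 := by
    rw [show x/2 = (1-u)/4 by rw [hu]; ring]
    rw [Real.log_div (by rw [hu]; intro hc; nlinarith) (by norm_num)]
  have l3 : Real.log ((1+x)/2) = Real.log (3-u) - Real.log 4 := by
    rw [show ((1:ℝ)+x)/2 = (3-u)/4 by rw [hu]; ring]
    rw [Real.log_div (by rw [hu]; intro hc; nlinarith) (by norm_num)]
  have l4 : Real.log ((1-x)/2) = Real.log (1+u) - Real.log 4 := by
    rw [show ((1:ℝ)-x)/2 = (1+u)/4 by rw [hu]; ring]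
    rw [Real.log_div (by rw [hu]; intro hc; nlinarith) (by norm_num)]
  have l5 : Real.log (1 - (p+(1-2*p)*x)) = Real.log (1+v) - Real.log 2 := by
    rw [show (1:ℝ) - (p+(1-2*p)*x) = (1+v)/2 by rw [hv]; ring]
    rw [Real.log_div (by rw [hv]; intro hc; nlinarith) (by norm_num)]
  have l6 : Real.log (p+(1-2*p)*x) = Real.log (1-v) - Real.log 2 := by
    have hvlt : v < 1 := by rw [hv]; nlinarith
    rw [show p+(1-2*p)*x = (1-v)/2 by rw [hv]; ring]
    rw [Real.log_div (by intro hc; nlinarith) (by norm_num)]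
  simp only [NNf, DDf, l1, l2, l3, l4, l5, l6]
  -- now express the goal as positive multiple of kuv
  have hvlt : v < 1 := by rw [hv]; nlinarith
  have hxu : x = (1-u)/2 := by rw [hu]; ring
  have hpv : 1-2*p = v/u := by rw [hv, hu]; exact (mul_div_cancel_right₀ _ (ne_of_gt hu0)).symm
  have hq1 : (1:ℝ) - (p+(1-2*p)*x) = (1+v)/2 := by rw [hv]; ring
  have hq2 : p+(1-2*p)*x = (1-v)/2 := by rw [hv]; ring
  rw [hq1, hq2, hpv, hxu]
  have hu1' : (0:ℝ) < 1-u := by rw [hu]; linarith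
  have hu1'' : (0:ℝ) < 1+u := by rw [hu]; linarith
  have h3m : (0:ℝ) < 3-u := by rw [hu]; linarith
  have h3p : (0:ℝ) < 3+u := by rw [hu]; linarith
  have hv1' : (0:ℝ) < 1-v := by linarith
  have hv1'' : (0:ℝ) < 1+v := by linarith
  clear_value u v
  clear hu hv hxu hpv hq1 hq2 l1 l2 l3 l4 l5 l6 hvw hvlt
  have ne1 := hu1'.ne'
  have ne2 := hu1''.ne'
  have ne3 := h3m.ne'
  have ne4 := h3p.ne'
  have ne5 := hv1'.ne'
  have ne6 := hv1''.ne'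
  have ne7 := hu0.ne'
  have a1 : (0:ℝ) < 1-u^2 := by nlinarith
  have a2 : (0:ℝ) < 9-u^2 := by nlinarith
  have a3 : (0:ℝ) < 1-v^2 := by nlinarith
  have c1 : (-(v/u))/((1+v)/2) - (v/u)/((1-v)/2) = -(4*v/(u*(1-v^2))) := by
    field_simp
    ring
  have c2 : (-(1/(2-(1-u)/2)) - 1/((1-u)/2) - 1/(1+(1-u)/2) - 1/(1-(1-u)/2))
      = -(16*(3-u^2)/((1-u^2)*(9-u^2))) := by
    rw [show (2:ℝ)-(1-u)/2 = (3+u)/2 by ring, show (1:ℝ)+(1-u)/2 = (3-u)/2 by ring,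
      show (1:ℝ)-(1-u)/2 = (1+u)/2 by ring]
    rw [show (1:ℝ)-u^2 = (1-u)*(1+u) by ring, show (9:ℝ)-u^2 = (3-u)*(3+u) by ring]
    field_simp
    ring
  rw [c1, c2]
  have hXpos : (0:ℝ) < u^2*((1-u^2)*(9-u^2))*(1-v^2) := by positivity
  refine (mul_nonneg_iff_of_pos_right hXpos).mp ?_
  have expand :
      ((-(4*v/(u*(1-v^2))))*(v/u) *
        (((Real.log (3+u) - Real.log 4) - (Real.log (1-u) - Real.log 4)
          - ((Real.log (3-u) - Real.log 4) - (Real.log (1+u) - Real.log 4)))/2)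
      - ((Real.log (1+v) - Real.log 2) - (Real.log (1-v) - Real.log 2)) * (v/u)
        * ((-(16*(3-u^2)/((1-u^2)*(9-u^2))))/2))
        * (u^2*((1-u^2)*(9-u^2))*(1-v^2))
      = (2*v)
        * (4*u*(3-u^2)*(1-v^2)*(Real.log (1+v) - Real.log (1-v))
          - v*(1-u^2)*(9-u^2)*((Real.log (3+u) + Real.log (1+u))
            - (Real.log (3-u) + Real.log (1-u)))) := by
    field_simp
    ring
  rw [expand]
  exact mul_nonneg (by positivity) (by linarith)




lemma ratio_mono {p : ℝ} (hp6 : 1/6 ≤ p) (hp2 : p < 1/2) :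
    MonotoneOn (fun x => NNf p x / DDf x) (Ioo (0:ℝ) (1/2)) := by
  have hder : ∀ x ∈ Ioo (0:ℝ) (1/2), HasDerivAt (fun x => NNf p x / DDf x)
      (((((-(1-2*p))/(1-(p+(1-2*p)*x)) - (1-2*p)/(p+(1-2*p)*x))*(1-2*p)) * DDf x
        - NNf p x * ((-(1/(2-x)) - 1/x - 1/(1+x) - 1/(1-x))/2)) / (DDf x)^2) x := by
    intro x hx
    exact (hasDerivAt_NNf hp6 hp2 hx.1 hx.2).div (hasDerivAt_DDf hx.1 hx.2)
      (ne_of_gt (DDf_pos hx.1 hx.2))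
  apply monotoneOn_of_hasDerivWithinAt_nonneg (convex_Ioo 0 (1/2))
  · exact fun x hx => ((hder x hx).continuousAt).continuousWithinAt
  · intro x hx
    rw [interior_Ioo] at hx
    exact (hder x hx).hasDerivWithinAt
  · intro x hx
    rw [interior_Ioo] at hx
    exact div_nonneg (keyX hp6 hp2 hx.1 hx.2) (sq_nonneg _)

lemma f_eq : f = fun x => (Real.binEntropy (x/2) + Real.binEntropy ((1-x)/2))/Real.log 2 - 1 := by
  funext x
  rw [show f x = binent (x/2) + binent ((1-x)/2) - 1 from rfl, binent_eq, binent_eq]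
  ring

lemma f_continuous : Continuous f := by
  have : f = fun x => binent (x/2) + binent ((1-x)/2) - 1 := rfl
  rw [this]
  exact ((binent_continuous.comp (continuous_id.div_const 2)).add
    (binent_continuous.comp ((continuous_const.sub continuous_id).div_const 2))).sub
    continuous_const

lemma hasDerivAt_f {x : ℝ} (hx0 : 0 < x) (hx2 : x < 1/2) :
    HasDerivAt f (DDf x / Real.log 2) x := by
  have i1 : HasDerivAt (fun y : ℝ => y/2) (1/2) x := by
    simpa using (hasDerivAt_id x).div_const 2
  have i2 : HasDerivAt (fun y : ℝ => (1-y)/2) (-(1/2)) x := by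
    have := ((hasDerivAt_id x).const_sub 1).div_const 2
    refine this.congr_deriv ?_
    norm_num
  have h1 : HasDerivAt (fun y : ℝ => Real.binEntropy (y/2))
      ((Real.log (1 - x/2) - Real.log (x/2)) * (1/2)) x :=
    (Real.hasDerivAt_binEntropy (by positivity) (by intro hc; nlinarith)).comp x i1
  have h2 : HasDerivAt (fun y : ℝ => Real.binEntropy ((1-y)/2))
      ((Real.log (1 - (1-x)/2) - Real.log ((1-x)/2)) * (-(1/2))) x :=
    (Real.hasDerivAt_binEntropy (by intro hc; nlinarith) (by intro hc; nlinarith)).comp x i2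
  have := ((h1.add h2).div_const (Real.log 2)).sub_const 1
  rw [f_eq]
  refine this.congr_deriv (Eq.symm ?_)
  rw [show (1:ℝ) - (1-x)/2 = (1+x)/2 by ring]
  show DDf x / Real.log 2 = _
  rw [show DDf x = ((Real.log (1 - x/2) - Real.log (x/2)) - (Real.log ((1+x)/2) - Real.log ((1-x)/2)))/2 from rfl]
  ring

lemma f_strictMono : StrictMonoOn f (Icc (0:ℝ) (1/2)) := by
  apply strictMonoOn_of_deriv_pos (convex_Icc 0 (1/2)) f_continuous.continuousOn
  intro x hx
  rw [interior_Icc] at hx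
  rw [(hasDerivAt_f hx.1 hx.2).deriv]
  exact div_pos (DDf_pos hx.1 hx.2) (Real.log_pos one_lt_two)

theorem stmt_15 (p : ℝ) (hp : p ∈ Ico (1 / 6 : ℝ) (1 / 2)) (finv : ℝ → ℝ)
    (hfinv : ∀ y ∈ Icc (0 : ℝ) (2 * binent (1 / 4) - 1),
      finv y ∈ Icc (0 : ℝ) (1 / 2) ∧ f (finv y) = y) :
    ConvexOn ℝ (Icc (0 : ℝ) (2 * binent (1 / 4) - 1))
      (fun y => binent (finv y * (1 - p) + (1 - finv y) * p)) := by
  obtain ⟨hp6, hp2⟩ := hp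
  set M : ℝ := 2 * binent (1/4) - 1 with hM
  set GG : ℝ → ℝ := fun x => Real.binEntropy (p + (1-2*p)*x) with hGG
  have contG : Continuous GG := Real.binEntropy_continuous.comp (by fun_prop)
  have hasDerivAt_GG : ∀ x ∈ Ioo (0:ℝ) (1/2), HasDerivAt GG (NNf p x) x := by
    intro x hx
    have hq := q_mem hp6 hp2 hx.1.le hx.2.le
    have inner : HasDerivAt (fun y : ℝ => p + (1-2*p)*y) (1-2*p) x := by
      simpa using ((hasDerivAt_id x).const_mul (1-2*p)).const_add p
    exact (Real.hasDerivAt_binEntropy (ne_of_gt hq.1) (by intro hc; nlinarith [hq.2])).comp x inner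
  -- convexity of the unscaled composition
  have hconv0 : ConvexOn ℝ (Icc (0:ℝ) M) (fun y => GG (finv y)) := by
    rw [convexOn_iff_slope_mono_adjacent]
    refine ⟨convex_Icc _ _, ?_⟩
    intro y1 y2 y3 hy1 hy3 h12 h23
    have hy2 : y2 ∈ Icc (0:ℝ) M := ⟨le_trans hy1.1 h12.le, le_trans h23.le hy3.2⟩
    obtain ⟨hx1m, hfx1⟩ := hfinv y1 hy1
    obtain ⟨hx2m, hfx2⟩ := hfinv y2 hy2
    obtain ⟨hx3m, hfx3⟩ := hfinv y3 hy3
    set x1 := finv y1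
    set x2 := finv y2
    set x3 := finv y3
    have hlt12 : x1 < x2 := by
      apply (f_strictMono.lt_iff_lt hx1m hx2m).mp
      rw [hfx1, hfx2]; exact h12
    have hlt23 : x2 < x3 := by
      apply (f_strictMono.lt_iff_lt hx2m hx3m).mp
      rw [hfx2, hfx3]; exact h23
    have hlog2 : (0:ℝ) < Real.log 2 := Real.log_pos one_lt_two
    -- mean value theorem on [x1,x2]
    have slope_eq : ∀ a b : ℝ, a ∈ Icc (0:ℝ) (1/2) → b ∈ Icc (0:ℝ) (1/2) → a < b →
        ∃ c ∈ Ioo a b, (GG b - GG a)/(f b - f a) = Real.log 2 * (NNf p c / DDf c) := by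
      intro a b ham hbm hab
      have hIoo : Ioo a b ⊆ Ioo (0:ℝ) (1/2) := Ioo_subset_Ioo ham.1 hbm.2
      obtain ⟨c, hcmem, hc⟩ := exists_ratio_hasDerivAt_eq_ratio_slope f
        (fun x => DDf x / Real.log 2) hab f_continuous.continuousOn
        (fun x hx => hasDerivAt_f (hIoo hx).1 (hIoo hx).2)
        GG (NNf p) contG.continuousOn
        (fun x hx => hasDerivAt_GG x (hIoo hx))
      refine ⟨c, hcmem, ?_⟩
      have hcin := hIoo hcmem
      have hD : 0 < DDf c := DDf_pos hcin.1 hcin.2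
      have hfab : 0 < f b - f a := by
        have := f_strictMono ham hbm hab
        linarith
      rw [div_eq_iff (ne_of_gt hfab)]
      field_simp at hc ⊢
      linear_combination hc
    obtain ⟨c1, hc1mem, hc1⟩ := slope_eq x1 x2 hx1m hx2m hlt12
    obtain ⟨c2, hc2mem, hc2⟩ := slope_eq x2 x3 hx2m hx3m hlt23
    have e1 : y2 - y1 = f x2 - f x1 := by rw [hfx1, hfx2]
    have e2 : y3 - y2 = f x3 - f x2 := by rw [hfx2, hfx3]
    rw [e1, e2, hc1, hc2]
    apply mul_le_mul_of_nonneg_left _ hlog2.le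
    apply ratio_mono hp6 hp2
    · exact ⟨lt_of_le_of_lt hx1m.1 hc1mem.1, lt_of_lt_of_le hc1mem.2 hx2m.2⟩
    · exact ⟨lt_of_le_of_lt hx2m.1 hc2mem.1, lt_of_lt_of_le hc2mem.2 hx3m.2⟩
    · exact (lt_trans hc1mem.2 hc2mem.1).le
  -- rescale
  have hgeq : (fun y => binent (finv y * (1 - p) + (1 - finv y) * p))
      = fun y => (Real.log 2)⁻¹ * GG (finv y) := by
    funext y
    rw [show finv y * (1 - p) + (1 - finv y) * p = p + (1-2*p)*finv y by ring, binent_eq,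
      div_eq_inv_mul]
  rw [hgeq]
  have := hconv0.smul (c := (Real.log 2)⁻¹)
    (inv_nonneg.mpr (Real.log_pos one_lt_two).le)
  simpa [smul_eq_mul] using this
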